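/- arXiv:2604.24652 — 2 statements merged into one kernel-verified Lean document; each statement's English description precedes it below -/
import Mathlib

section
/- Let (M_n) be a square-integrable martingale with M_0 = 0 whose increments X_s = M_s - M_{s-1} are independent with mean zero and variance sigma^2. Fix an integer n_0 >= 1 and let T be a random positive-integer-valued variable and E an event such that T >= n_0 on E. Then E[(M_T / T)^2 * 1_E] <= 32 * sigma^2 / n_0. -/
open MeasureTheory ProbabilityTheory Finset

namespace MseAux

/-- running max (starting from 0) of partial sums of `x`. -/
def maxFn : ℕ → (ℕ → ℝ) → ℝ
  | 0 => fun _ => 0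
  | n+1 => fun x => max (maxFn n x) (∑ s ∈ range (n+1), x s)

lemma maxFn_nonneg (x : ℕ → ℝ) : ∀ n, 0 ≤ maxFn n x
  | 0 => le_refl 0
  | n+1 => le_trans (maxFn_nonneg x n) (le_max_left _ _)

lemma maxFn_mono (x : ℕ → ℝ) {n m : ℕ} (h : n ≤ m) : maxFn n x ≤ maxFn m x := by
  induction m with
  | zero => simp_all
  | succ m ih =>
    rcases Nat.eq_or_lt_of_le h with rfl | h'
    · exact le_refl _
    · exact le_trans (ih (Nat.lt_succ_iff.mp h')) (le_max_left _ _)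

lemma sum_le_maxFn (x : ℕ → ℝ) {n m : ℕ} (h : n ≤ m) :
    (∑ s ∈ range n, x s) ≤ maxFn m x := by
  rcases Nat.eq_zero_or_pos n with rfl | hn
  · simpa using maxFn_nonneg x m
  · obtain ⟨k, rfl⟩ := Nat.exists_eq_add_of_lt hn
    calc (∑ s ∈ range (0 + k + 1), x s) ≤ maxFn (0 + k + 1) x := le_max_right _ _
    _ ≤ maxFn m x := maxFn_mono x h

lemma maxFn_congr : ∀ (n : ℕ) {x y : ℕ → ℝ}, (∀ i < n, x i = y i) → maxFn n x = maxFn n y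
  | 0, x, y, _ => rfl
  | n+1, x, y, h => by
    have h1 : maxFn n x = maxFn n y := maxFn_congr n fun i hi => h i (Nat.lt_succ_of_lt hi)
    have h2 : (∑ s ∈ range (n+1), x s) = ∑ s ∈ range (n+1), y s :=
      Finset.sum_congr rfl fun i hi => h i (mem_range.mp hi)
    simp [maxFn, h1, h2]

lemma measurable_maxFn : ∀ n, Measurable (maxFn n)
  | 0 => measurable_const
  | n+1 => (measurable_maxFn n).max (Finset.measurable_sum _ fun i _ => measurable_pi_apply i)

/-- Pathwise Doob: key summation bound, by induction. -/
lemma pathD (x : ℕ → ℝ) (m : ℕ) :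
    ∑ n ∈ range m, maxFn n x * x n ≤
      maxFn m x * (∑ s ∈ range m, x s) - (maxFn m x)^2 / 2 := by
  induction m with
  | zero => simp [maxFn]
  | succ m ih =>
    rw [Finset.sum_range_succ]
    have key : maxFn m x * (∑ s ∈ range (m+1), x s) - (maxFn m x)^2/2 ≤
        maxFn (m+1) x * (∑ s ∈ range (m+1), x s) - (maxFn (m+1) x)^2/2 := by
      have hm : maxFn (m+1) x = max (maxFn m x) (∑ s ∈ range (m+1), x s) := rfl
      rcases le_total (∑ s ∈ range (m+1), x s) (maxFn m x) with h | h
      · rw [hm, max_eq_left h]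
      · rw [hm, max_eq_right h]
        nlinarith [sq_nonneg ((∑ s ∈ range (m+1), x s) - maxFn m x)]
    have step : (∑ n ∈ range m, maxFn n x * x n) + maxFn m x * x m ≤
        maxFn m x * (∑ s ∈ range (m+1), x s) - (maxFn m x)^2/2 := by
      rw [Finset.sum_range_succ (f := x)]
      nlinarith [ih]
    exact le_trans step key

/-- Pathwise Doob inequality (one-sided, `p = 2`). -/
lemma pathDoob (x : ℕ → ℝ) (m : ℕ) :
    (maxFn m x)^2 ≤ 4 * (∑ s ∈ range m, x s)^2 - 4 * ∑ n ∈ range m, maxFn n x * x n := by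
  nlinarith [pathD x m, sq_nonneg (2 * (∑ s ∈ range m, x s) - maxFn m x)]

variable {Ω : Type*} [MeasureSpace Ω] [IsProbabilityMeasure (ℙ : Measure Ω)]

lemma integrable_mul_L2 {f g : Ω → ℝ} (hf : MemLp f 2 ℙ) (hg : MemLp g 2 ℙ) :
    Integrable (fun ω => f ω * g ω) ℙ := by
  refine Integrable.mono' ((hf.integrable_sq.add hg.integrable_sq).const_mul (1/2))
    (hf.aestronglyMeasurable.mul hg.aestronglyMeasurable) (Filter.Eventually.of_forall fun ω => ?_)
  rw [Real.norm_eq_abs, abs_mul]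
  simp only [Pi.add_apply]
  nlinarith [sq_nonneg (|f ω| - |g ω|), abs_nonneg (f ω), abs_nonneg (g ω),
    sq_abs (f ω), sq_abs (g ω)]

section Doob

variable (X : ℕ → Ω → ℝ)

/-- running max of partial sums as a random variable. -/
def Rv (X : ℕ → Ω → ℝ) (n : ℕ) (ω : Ω) : ℝ := maxFn n (fun i => X i ω)

lemma measurable_Rv (hmeas : ∀ s, Measurable (X s)) (n : ℕ) : Measurable (Rv X n) :=
  (measurable_maxFn n).comp (measurable_pi_lambda _ fun i => hmeas i)

lemma memℒp_sum (hL2 : ∀ s, MemLp (X s) 2 ℙ) (n : ℕ) : MemLp (fun ω => ∑ s ∈ range n, X s ω) 2 ℙ :=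
  memLp_finset_sum (range n) fun i _ => hL2 i

lemma memℒp_Rv (hL2 : ∀ s, MemLp (X s) 2 ℙ) : ∀ n, MemLp (Rv X n) 2 ℙ
  | 0 => by exact (memLp_const (0:ℝ) (μ := (ℙ : Measure Ω)) (p := 2))
  | n+1 => by
    have h := (memℒp_Rv hL2 n).sup (memℒp_sum X hL2 (n+1))
    have : (Rv X n ⊔ fun ω => ∑ s ∈ range (n+1), X s ω) = Rv X (n+1) := by
      funext ω; simp [Rv, maxFn, Pi.sup_apply, max_def, Max.max]
    rwa [this] at h

lemma integral_sum_sq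
    (hindep : iIndepFun X ℙ)
    (hL2 : ∀ s, MemLp (X s) 2 ℙ)
    (σ2 : ℝ) (hmean : ∀ s, (∫ ω, X s ω) = 0) (hvar : ∀ s, (∫ ω, (X s ω)^2) = σ2)
    (m : ℕ) :
    ∫ ω, (∑ s ∈ range m, X s ω)^2 = m * σ2 := by
  have hsum : (fun ω => ∑ s ∈ range m, X s ω) = ∑ s ∈ range m, X s := by
    funext ω; simp
  have hmem : MemLp (∑ s ∈ range m, X s) 2 ℙ := by rw [← hsum]; exact memℒp_sum X hL2 m
  have hvd := variance_eq_sub hmem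
  have hmeanS : (∫ ω, (∑ s ∈ range m, X s) ω) = 0 := by
    simp only [Finset.sum_apply]
    rw [integral_finset_sum _ fun i _ => (hL2 i).integrable one_le_two]
    simp [hmean]
  have hvs : variance (∑ s ∈ range m, X s) ℙ = m * σ2 := by
    rw [IndepFun.variance_sum (fun i _ => hL2 i)
      (fun i _ j _ hij => hindep.indepFun hij)]
    have : ∀ i ∈ range m, variance (X i) ℙ = σ2 := by
      intro i _
      rw [variance_eq_sub (hL2 i)]
      simp [hmean i, hvar i]
    rw [Finset.sum_congr rfl this]
    simp [mul_comm]
  rw [hvs, hmeanS] at hvd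
  simp only [Pi.pow_apply, Finset.sum_apply] at hvd
  linarith [hvd]

lemma indep_Rv (hmeas : ∀ s, Measurable (X s))
    (hindep : iIndepFun X ℙ) (n : ℕ) : IndepFun (Rv X n) (X n) ℙ := by
  classical
  have h := hindep.indepFun_finset (range n) {n} (by simp) hmeas
  set φ : ((i : (range n : Finset ℕ)) → ℝ) → ℝ :=
    fun v => maxFn n (fun i => if hi : i ∈ range n then v ⟨i, hi⟩ else 0) with hφdef
  have hφ : Measurable φ := by
    apply (measurable_maxFn n).comp
    apply measurable_pi_lambda
    intro i
    by_cases hi : i ∈ range n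
    · simp only [hi, dif_pos]; exact measurable_pi_apply _
    · simp only [hi, dif_neg, not_false_iff]; exact measurable_const
  set ψ : ((i : ({n} : Finset ℕ)) → ℝ) → ℝ := fun v => v ⟨n, Finset.mem_singleton_self n⟩
  have hψ : Measurable ψ := measurable_pi_apply _
  have h2 := h.comp hφ hψ
  have e1 : (φ ∘ fun ω (i : (range n : Finset ℕ)) => X i ω) = Rv X n := by
    funext ω
    exact maxFn_congr n fun i hi => by simp [mem_range.mpr hi]
  have e2 : (ψ ∘ fun ω (i : ({n} : Finset ℕ)) => X i ω) = X n := rfl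
  rwa [e1, e2] at h2

lemma cross_zero (hmeas : ∀ s, Measurable (X s))
    (hindep : iIndepFun X ℙ)
    (hL2 : ∀ s, MemLp (X s) 2 ℙ) (hmean : ∀ s, (∫ ω, X s ω) = 0) (n : ℕ) : ∫ ω, Rv X n ω * X n ω = 0 := by
  have h := (indep_Rv X hmeas hindep n).integral_mul_eq_mul_integral
    ((memℒp_Rv X hL2 n).integrable one_le_two).aestronglyMeasurable ((hL2 n).integrable one_le_two).aestronglyMeasurable
  have : (∫ ω, (Rv X n * X n) ω) = ∫ ω, Rv X n ω * X n ω := rfl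
  rw [← this, h, hmean n, mul_zero]

lemma doob_one (hmeas : ∀ s, Measurable (X s))
    (hindep : iIndepFun X ℙ)
    (hL2 : ∀ s, MemLp (X s) 2 ℙ)
    (σ2 : ℝ) (hmean : ∀ s, (∫ ω, X s ω) = 0) (hvar : ∀ s, (∫ ω, (X s ω)^2) = σ2)
    (m : ℕ) :
    ∫ ω, (Rv X m ω)^2 ≤ 4 * m * σ2 := by
  have hint1 : Integrable (fun ω => (Rv X m ω)^2) ℙ := (memℒp_Rv X hL2 m).integrable_sq
  have hintS : Integrable (fun ω => (∑ s ∈ range m, X s ω)^2) ℙ :=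
    (memℒp_sum X hL2 m).integrable_sq
  have hintC : ∀ n, Integrable (fun ω => Rv X n ω * X n ω) ℙ := fun n =>
    integrable_mul_L2 (memℒp_Rv X hL2 n) (hL2 n)
  have hintSum : Integrable (fun ω => ∑ n ∈ range m, Rv X n ω * X n ω) ℙ :=
    integrable_finset_sum _ fun n _ => hintC n
  have hint2 : Integrable
      (fun ω => 4 * (∑ s ∈ range m, X s ω)^2 - 4 * ∑ n ∈ range m, Rv X n ω * X n ω) ℙ :=
    (hintS.const_mul 4).sub (hintSum.const_mul 4)
  have hmono : ∫ ω, (Rv X m ω)^2 ≤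
      ∫ ω, (4 * (∑ s ∈ range m, X s ω)^2 - 4 * ∑ n ∈ range m, Rv X n ω * X n ω) := by
    refine integral_mono hint1 hint2 fun ω => ?_
    exact pathDoob (fun i => X i ω) m
  rw [integral_sub (hintS.const_mul 4) (hintSum.const_mul 4),
    integral_const_mul, integral_const_mul,
    integral_finset_sum _ fun n _ => hintC n,
    integral_sum_sq X hindep hL2 σ2 hmean hvar m] at hmono
  have hz : (∑ n ∈ range m, ∫ ω, Rv X n ω * X n ω) = 0 := by
    rw [Finset.sum_congr rfl fun n _ => cross_zero X hmeas hindep hL2 hmean n]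
    simp
  rw [hz] at hmono
  linarith [hmono]

end Doob

end MseAux

open MseAux

/-- MSE bound from a deterministic pull lower bound (dyadic peeling + Doob):
if `M_n = ∑_{s≤n} X_s` with independent mean-zero increments of variance `σ²`,
`T` is a random positive integer with `T ≥ n₀` on the event `E`, then
`E[(M_T/T)² 1_E] ≤ 32 σ²/n₀`. -/
theorem mse_bound_random_count {Ω : Type*} [MeasureSpace Ω]
    [IsProbabilityMeasure (ℙ : Measure Ω)]
    (X : ℕ → Ω → ℝ) (hmeas : ∀ s, Measurable (X s))
    (hindep : iIndepFun X ℙ)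
    (hL2 : ∀ s, MemLp (X s) 2 ℙ)
    (σ2 : ℝ) (hmean : ∀ s, (∫ ω, X s ω) = 0) (hvar : ∀ s, (∫ ω, (X s ω)^2) = σ2)
    (T : Ω → ℕ) (hT_meas : Measurable T) (hT_pos : ∀ ω, 1 ≤ T ω)
    (E : Set Ω) (hE : MeasurableSet E)
    (n₀ : ℕ) (hn₀ : 1 ≤ n₀) (hTE : ∀ ω ∈ E, n₀ ≤ T ω) :
    ∫ ω in E, ((∑ s ∈ Finset.range (T ω), X s ω) / (T ω : ℝ))^2 ≤
      32 * σ2 / n₀ := by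
  classical
  have hσ : 0 ≤ σ2 := by
    rw [← hvar 0]; exact integral_nonneg fun ω => sq_nonneg _
  set f : Ω → ℝ := fun ω => ((∑ s ∈ Finset.range (T ω), X s ω) / (T ω : ℝ))^2 with hfdef
  by_cases hInt : IntegrableOn f E ℙ
  swap
  · rw [integral_undef hInt]
    positivity
  -- negated increments
  set X' : ℕ → Ω → ℝ := fun s ω => -(X s ω) with hX'def
  have hmeas' : ∀ s, Measurable (X' s) := fun s => (hmeas s).neg
  have hindep' : iIndepFun X' ℙ := by
    have := hindep.comp (fun _ => (fun x : ℝ => -x)) (fun _ => measurable_neg)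
    exact this
  have hL2' : ∀ s, MemLp (X' s) 2 ℙ := fun s => (hL2 s).neg
  have hmean' : ∀ s, (∫ ω, X' s ω) = 0 := fun s => by
    simp only [hX'def]; rw [integral_neg, hmean s, neg_zero]
  have hvar' : ∀ s, (∫ ω, (X' s ω)^2) = σ2 := fun s => by
    simp only [hX'def, neg_sq]; exact hvar s
  -- block events
  set D : ℕ → Set Ω := fun k => E ∩ {ω | 2^k * n₀ ≤ T ω ∧ T ω < 2^(k+1) * n₀} with hDdef
  have hDmeas : ∀ k, MeasurableSet (D k) := by
    intro k
    have h1 : MeasurableSet {n : ℕ | 2^k * n₀ ≤ n ∧ n < 2^(k+1) * n₀} :=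
      (Set.to_countable _).measurableSet
    exact hE.inter (hT_meas h1)
  have hDsubE : ∀ k, D k ⊆ E := fun k => Set.inter_subset_left
  have hDdisj : Pairwise (Function.onFun Disjoint D) := by
    intro k k' hkk'
    wlog hlt : k < k' generalizing k k'
    · exact (this hkk'.symm (by omega)).symm
    refine Set.disjoint_left.mpr fun ω hω hω' => ?_
    have h1 : T ω < 2^(k+1) * n₀ := hω.2.2
    have h2 : 2^k' * n₀ ≤ T ω := hω'.2.1
    have h3 : (2:ℕ)^(k+1) ≤ 2^k' := Nat.pow_le_pow_right (by norm_num) hlt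
    have h4 : 2^(k+1) * n₀ ≤ 2^k' * n₀ := Nat.mul_le_mul_right _ h3
    omega
  -- truncation events
  set s : ℕ → Set Ω := fun K => E ∩ {ω | T ω < 2^K * n₀} with hsdef
  have hsm : ∀ K, MeasurableSet (s K) := by
    intro K
    have h1 : MeasurableSet {n : ℕ | n < 2^K * n₀} := (Set.to_countable _).measurableSet
    exact hE.inter (hT_meas h1)
  have hmono : Monotone s := by
    intro K K' hKK' ω hω
    refine ⟨hω.1, ?_⟩
    show T ω < 2^K' * n₀
    exact lt_of_lt_of_le hω.2 (Nat.mul_le_mul_right _ (Nat.pow_le_pow_right (by norm_num) hKK'))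
  have hUnion : (⋃ K, s K) = E := by
    apply Set.Subset.antisymm
    · exact Set.iUnion_subset fun K => Set.inter_subset_left
    · intro ω hω
      refine Set.mem_iUnion.mpr ⟨T ω, hω, ?_⟩
      calc T ω < 2 ^ T ω := Nat.lt_two_pow_self
      _ ≤ 2 ^ T ω * n₀ := Nat.le_mul_of_pos_right _ hn₀
  have hs_eq : ∀ K, s K = ⋃ k ∈ Finset.range K, D k := by
    intro K
    ext ω
    simp only [hsdef, hDdef, Set.mem_inter_iff, Set.mem_setOf_eq, Set.mem_iUnion,
      Finset.mem_range, exists_prop]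
    constructor
    · rintro ⟨hωE, hlt⟩
      have hn₀T : n₀ ≤ T ω := hTE ω hωE
      have hTpos : 0 < T ω / n₀ := Nat.div_pos hn₀T hn₀
      set k := Nat.log 2 (T ω / n₀) with hkdef
      have h1 : 2^k ≤ T ω / n₀ := Nat.pow_log_le_self 2 hTpos.ne'
      have h1' : 2^k * n₀ ≤ T ω :=
        le_trans (Nat.mul_le_mul_right _ h1) (Nat.div_mul_le_self _ _)
      have h2 : T ω / n₀ < 2^(k+1) := Nat.lt_pow_succ_log_self (by norm_num) _
      have h2' : T ω < 2^(k+1) * n₀ := (Nat.div_lt_iff_lt_mul hn₀).mp h2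
      have hkK : k < K := by
        have : (2:ℕ)^k < 2^K := by
          have := lt_of_le_of_lt h1' hlt
          exact lt_of_mul_lt_mul_right this (Nat.zero_le n₀)
        exact (Nat.pow_lt_pow_iff_right (by norm_num)).mp this
      exact ⟨k, hkK, hωE, h1', h2'⟩
    · rintro ⟨k, hkK, hωE, h1, h2⟩
      refine ⟨hωE, lt_of_lt_of_le h2 ?_⟩
      exact Nat.mul_le_mul_right _ (Nat.pow_le_pow_right (by norm_num) hkK)
  -- per-block bound
  have hblock : ∀ k : ℕ, ∫ ω in D k, f ω ≤ 16 * σ2 / ((2^k * n₀ : ℕ) : ℝ) := by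
    intro k
    set m := 2^(k+1) * n₀ with hmdef
    set c : ℝ := ((2^k * n₀ : ℕ) : ℝ) with hcdef
    have hcpos : 0 < c := by
      rw [hcdef]
      exact_mod_cast Nat.pos_of_ne_zero (by positivity)
    set g : Ω → ℝ := fun ω => ((Rv X m ω)^2 + (Rv X' m ω)^2) / c^2 with hgdef
    have hg_int : Integrable g ℙ := by
      exact (((memℒp_Rv X hL2 m).integrable_sq.add
        (memℒp_Rv X' hL2' m).integrable_sq).div_const _)
    have hpt : ∀ ω ∈ D k, f ω ≤ g ω := by
      rintro ω ⟨hωE, hc1, hc2⟩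
      have hTm : T ω ≤ m := le_of_lt hc2
      have hv1 : (∑ s ∈ Finset.range (T ω), X s ω) ≤ Rv X m ω :=
        sum_le_maxFn (fun i => X i ω) hTm
      have hv2 : -(∑ s ∈ Finset.range (T ω), X s ω) ≤ Rv X' m ω := by
        have := sum_le_maxFn (fun i => X' i ω) hTm
        simpa [hX'def, Finset.sum_neg_distrib, Rv] using this
      have hR1 : 0 ≤ Rv X m ω := maxFn_nonneg _ _
      have hR2 : 0 ≤ Rv X' m ω := maxFn_nonneg _ _
      have hcT : c ≤ (T ω : ℝ) := by
        rw [hcdef]; exact_mod_cast hc1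
      have hsq : (∑ s ∈ Finset.range (T ω), X s ω)^2 ≤ (Rv X m ω)^2 + (Rv X' m ω)^2 := by
        rcases le_or_gt 0 (∑ s ∈ Finset.range (T ω), X s ω) with h | h
        · have := pow_le_pow_left₀ h hv1 2
          nlinarith [sq_nonneg (Rv X' m ω)]
        · have h' : 0 ≤ -(∑ s ∈ Finset.range (T ω), X s ω) := by linarith
          have := pow_le_pow_left₀ h' hv2 2
          nlinarith [sq_nonneg (Rv X m ω)]
      rw [hfdef, hgdef]
      simp only
      rw [div_pow]
      exact div_le_div₀ (by positivity) hsq (pow_pos hcpos 2)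
        (pow_le_pow_left₀ hcpos.le hcT 2)
    have step1 : ∫ ω in D k, f ω ≤ ∫ ω in D k, g ω :=
      setIntegral_mono_on (hInt.mono_set (hDsubE k)) (hg_int.integrableOn) (hDmeas k) hpt
    have step2 : ∫ ω in D k, g ω ≤ ∫ ω, g ω :=
      setIntegral_le_integral hg_int (Filter.Eventually.of_forall fun ω => by
        rw [hgdef]; positivity)
    have step3 : ∫ ω, g ω ≤ 8 * m * σ2 / c^2 := by
      rw [hgdef]
      simp only
      rw [integral_div, integral_add (memℒp_Rv X hL2 m).integrable_sq
        (memℒp_Rv X' hL2' m).integrable_sq]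
      have d1 := doob_one X hmeas hindep hL2 σ2 hmean hvar m
      have d2 := doob_one X' hmeas' hindep' hL2' σ2 hmean' hvar' m
      have : (∫ ω, (Rv X m ω)^2) + (∫ ω, (Rv X' m ω)^2) ≤ 8 * m * σ2 := by linarith
      gcongr
    have harith : 8 * (m:ℝ) * σ2 / c^2 = 16 * σ2 / ((2^k * n₀ : ℕ) : ℝ) := by
      rw [hcdef, hmdef]
      push_cast
      have h2k : (0:ℝ) < 2^k := by positivity
      have hn : (0:ℝ) < (n₀:ℝ) := by exact_mod_cast hn₀
      field_simp
      ring
    calc ∫ ω in D k, f ω ≤ ∫ ω, g ω := le_trans step1 step2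
    _ ≤ 8 * m * σ2 / c^2 := step3
    _ = 16 * σ2 / ((2^k * n₀ : ℕ) : ℝ) := harith
  -- sum over blocks
  have hK : ∀ K : ℕ, ∫ ω in s K, f ω ≤ 32 * σ2 / n₀ := by
    intro K
    rw [hs_eq K]
    rw [integral_biUnion_finset (Finset.range K) (fun k _ => hDmeas k)
      (fun k _ k' _ hkk' => hDdisj hkk')
      (fun k _ => hInt.mono_set (hDsubE k))]
    calc (∑ k ∈ Finset.range K, ∫ ω in D k, f ω)
        ≤ ∑ k ∈ Finset.range K, 16 * σ2 / ((2^k * n₀ : ℕ) : ℝ) :=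
          Finset.sum_le_sum fun k _ => hblock k
      _ = ∑ k ∈ Finset.range K, (16 * σ2 / n₀) * (1/2)^k := by
          refine Finset.sum_congr rfl fun k _ => ?_
          push_cast
          have h2k : ((2:ℝ))^k ≠ 0 := by positivity
          have hn : (n₀:ℝ) ≠ 0 := by
            have : (0:ℝ) < (n₀:ℝ) := by exact_mod_cast hn₀
            exact this.ne'
          rw [div_pow, one_pow, div_mul_div_comm, mul_one]
          rw [div_eq_div_iff (by positivity) (by positivity)]
          ring
      _ = (16 * σ2 / n₀) * ∑ k ∈ Finset.range K, (1/2:ℝ)^k := by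
          rw [Finset.mul_sum]
      _ ≤ (16 * σ2 / n₀) * 2 := by
          have hgs : (∑ k ∈ Finset.range K, (1/2:ℝ)^k) ≤ 2 := by
            rw [geom_sum_eq (by norm_num : (1/2:ℝ) ≠ 1)]
            have : (0:ℝ) ≤ (1/2:ℝ)^K := by positivity
            rw [div_le_iff_of_neg (by norm_num : (1/2:ℝ) - 1 < 0)]
            linarith
          have hc : 0 ≤ 16 * σ2 / (n₀:ℝ) := by positivity
          nlinarith
      _ = 32 * σ2 / n₀ := by ring
  -- pass to the limit
  have htendsto := tendsto_setIntegral_of_monotone hsm hmono (by rw [hUnion]; exact hInt)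
  rw [hUnion] at htendsto
  exact le_of_tendsto htendsto (Filter.Eventually.of_forall hK)
end

section
/- Fix alpha > 0 and an integer K >= 1. Suppose (m_t)_{t >= t_0} is a nondecreasing integer sequence such that: (i) for every block [t_r + 1, t_r + K] with t_r = t_0 + r*K, either there exists u in the block with m_{u-1} >= ceil(alpha * sqrt(u)), or m_{t_r + K} >= m_{t_r} + 1; and (ii) t_0 >= (alpha * K)^2, so that alpha*(sqrt(t + K) - sqrt(t)) <= 1 for all t >= t_0. Then there exists a finite constant C (depending only on alpha, K, and m_{t_0}) such that m_t >= alpha * sqrt(t) - C for all t >= t_0. -/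
open Real

/-- Deterministic count-floor lemma for forced exploration: a nondecreasing integer
sequence satisfying the block condition (each block of length `K` either touches the
quota `⌈α√u⌉` or increases by at least one) and starting after `t₀ ≥ (αK)²` stays
within a constant of `α√t`. -/
theorem forced_exploration_count_floor (α : ℝ) (hα : 0 < α) (K : ℕ) (hK : 1 ≤ K)
    (t₀ : ℕ) (ht₀ : (α * K)^2 ≤ (t₀ : ℝ))
    (m : ℕ → ℤ)
    (hmono : ∀ s t : ℕ, t₀ ≤ s → s ≤ t → m s ≤ m t)
    (hblock : ∀ r : ℕ,
      (∃ u : ℕ, t₀ + r * K + 1 ≤ u ∧ u ≤ t₀ + r * K + K ∧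
        ⌈α * Real.sqrt u⌉ ≤ m (u - 1)) ∨
      m (t₀ + r * K) + 1 ≤ m (t₀ + r * K + K)) :
    ∃ C : ℝ, ∀ t : ℕ, t₀ ≤ t → α * Real.sqrt t - C ≤ (m t : ℝ) := by
  -- step lemma: for t ≥ t₀, α√(t+K) ≤ α√t + 1
  have hstep : ∀ t : ℕ, t₀ ≤ t → α * Real.sqrt ((t : ℝ) + K) ≤ α * Real.sqrt t + 1 := by
    intro t ht
    have hαK : α * K ≤ Real.sqrt t := by
      have h1 : ((α * K)^2 : ℝ) ≤ (t : ℝ) := le_trans ht₀ (by exact_mod_cast ht)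
      have := Real.sqrt_le_sqrt h1
      rwa [Real.sqrt_sq (by positivity)] at this
    have h2 : Real.sqrt ((t : ℝ) + K) ≤ Real.sqrt t + 1/α := by
      have hsq : ((t : ℝ) + K) ≤ (Real.sqrt t + 1/α)^2 := by
        have hst : Real.sqrt t ^ 2 = (t : ℝ) := Real.sq_sqrt (by positivity)
        have : (K : ℝ) ≤ 2 * Real.sqrt t * (1/α) := by
          rw [mul_one_div, le_div_iff₀ hα]
          nlinarith [hαK, hK, hα.le]
        nlinarith [sq_nonneg (1/α)]
      calc Real.sqrt ((t : ℝ) + K) ≤ Real.sqrt ((Real.sqrt t + 1/α)^2) :=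
            Real.sqrt_le_sqrt hsq
        _ = Real.sqrt t + 1/α := Real.sqrt_sq (by positivity)
    have h3 : α * (Real.sqrt t + 1/α) = α * Real.sqrt t + 1 := by
      field_simp
    calc α * Real.sqrt ((t : ℝ) + K) ≤ α * (Real.sqrt t + 1/α) :=
          mul_le_mul_of_nonneg_left h2 hα.le
      _ = α * Real.sqrt t + 1 := h3
  set D : ℝ := max (α * Real.sqrt t₀ - m t₀) 1 with hD
  -- deficit bound at block endpoints
  have hind : ∀ r : ℕ,
      α * Real.sqrt ((t₀ + r * K : ℕ) : ℝ) - m (t₀ + r * K) ≤ D := by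
    intro r
    induction r with
    | zero =>
      simp only [Nat.zero_mul, Nat.add_zero, hD]
      exact le_max_left _ _
    | succ r ih =>
      have htr : t₀ ≤ t₀ + r * K := Nat.le_add_right _ _
      have hk : t₀ + r * K + K = t₀ + (r+1) * K := by ring
      have hcast : ((t₀ + (r+1) * K : ℕ) : ℝ) = ((t₀ + r * K : ℕ) : ℝ) + K := by
        push_cast; ring
      rcases hblock r with ⟨u, hu1, hu2, hq⟩ | hinc
      · -- quota case
        have hle1 : t₀ ≤ u - 1 := by omega
        have hle2 : u - 1 ≤ t₀ + (r+1) * K := by omega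
        have hm : (α * Real.sqrt u : ℝ) ≤ m (t₀ + (r+1) * K) := by
          have h1 : (⌈α * Real.sqrt u⌉ : ℝ) ≤ m (u - 1) := by exact_mod_cast hq
          have h2 : (m (u-1) : ℝ) ≤ m (t₀ + (r+1)*K) := by
            exact_mod_cast hmono _ _ hle1 hle2
          calc (α * Real.sqrt u : ℝ) ≤ ⌈α * Real.sqrt u⌉ := Int.le_ceil _
            _ ≤ m (u-1) := h1
            _ ≤ m (t₀ + (r+1)*K) := h2
        have hsu : α * Real.sqrt ((t₀ + (r+1)*K : ℕ) : ℝ) ≤ α * Real.sqrt u + 1 := by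
          have htu : t₀ ≤ u := by omega
          have hle : ((t₀ + (r+1)*K : ℕ) : ℝ) ≤ ((u : ℝ) + K) := by
            have h4 : t₀ + (r+1)*K ≤ u + K := by omega
            exact_mod_cast h4
          calc α * Real.sqrt ((t₀ + (r+1)*K : ℕ) : ℝ)
              ≤ α * Real.sqrt ((u : ℝ) + K) :=
                mul_le_mul_of_nonneg_left (Real.sqrt_le_sqrt hle) hα.le
            _ ≤ α * Real.sqrt u + 1 := hstep u htu
        have h5 : α * Real.sqrt ((t₀ + (r+1)*K : ℕ) : ℝ) - m (t₀ + (r+1)*K) ≤ 1 := by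
          linarith
        exact le_trans h5 (le_max_right _ _)
      · -- increment case
        rw [hk] at hinc
        have hmc : (m (t₀ + r * K) : ℝ) + 1 ≤ (m (t₀ + (r+1)*K) : ℝ) := by
          exact_mod_cast hinc
        have hs : α * Real.sqrt ((t₀ + (r+1)*K : ℕ) : ℝ)
            ≤ α * Real.sqrt ((t₀ + r * K : ℕ) : ℝ) + 1 := by
          rw [hcast]; exact hstep (t₀ + r * K) htr
        linarith
  refine ⟨D + 1, fun t ht => ?_⟩
  obtain ⟨r, hr⟩ : ∃ r, r = (t - t₀) / K := ⟨_, rfl⟩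
  have hK0 : 0 < K := hK
  have h1 : r * K ≤ t - t₀ := by rw [hr]; exact Nat.div_mul_le_self _ _
  have h2 : t - t₀ < r * K + K := by
    rw [hr]
    exact Nat.lt_div_mul_add hK0
  have hlb : t₀ + r * K ≤ t := by omega
  have hub : t ≤ t₀ + r * K + K := by omega
  have hm : (m (t₀ + r * K) : ℝ) ≤ (m t : ℝ) := by
    exact_mod_cast hmono _ _ (Nat.le_add_right _ _) hlb
  have hs : α * Real.sqrt t ≤ α * Real.sqrt ((t₀ + r * K : ℕ) : ℝ) + 1 := by
    have h3 : (t : ℝ) ≤ ((t₀ + r * K : ℕ) : ℝ) + K := by exact_mod_cast hub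
    calc α * Real.sqrt t ≤ α * Real.sqrt (((t₀ + r * K : ℕ) : ℝ) + K) :=
          mul_le_mul_of_nonneg_left (Real.sqrt_le_sqrt h3) hα.le
      _ ≤ α * Real.sqrt ((t₀ + r * K : ℕ) : ℝ) + 1 := hstep _ (Nat.le_add_right _ _)
  have h6 := hind r
  linarith
end
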